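/- Let ℓ, n, m ≥ 1 and identify Σ_{ℓ,n,m} = ℝ^{ℓ×n} × ℝ^{ℓ×n} × ℝ^{ℓ×m} with ℝ^{ℓ(2n+m)}. The set S = {(E,A,B) ∈ Σ_{ℓ,n,m} : for every λ ∈ ℂ, rk [E, A, B] = rk [E, B] = rk_ℂ [λE − A, B]} (the set of completely controllable differential-algebraic systems d/dt(Ex) = Ax + Bu) is generic if, and only if, ℓ < n + m. -/

import Mathlib

open Matrix Polynomial

-- === general helpers ===

section Helpers

variable {R : Type*} [Field R]

lemma myRank_submatrix_equiv {m n m' n' : Type*} [Fintype m] [Fintype n] [Fintype m'] [Fintype n']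
    (A : Matrix m n R) (e₁ : m' ≃ m) (e₂ : n' ≃ n) :
    (A.submatrix e₁ e₂).rank = A.rank := by
  have h : A.submatrix e₁ e₂ = Matrix.reindex e₁.symm e₂.symm A := rfl
  rw [h, Matrix.rank, Matrix.rank, mulVecLin_reindex, LinearMap.range_comp, LinearMap.range_comp,
    LinearEquiv.range, Submodule.map_top, LinearEquiv.finrank_map_eq]

lemma myRank_submatrix_col_le {m n k : Type*} [Fintype m] [Fintype n] [Fintype k]
    (A : Matrix m n R) (g : k → n) :
    (A.submatrix id g).rank ≤ A.rank := by
  classical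
  rw [Matrix.rank_eq_finrank_span_row, Matrix.rank_eq_finrank_span_row]
  have h : Set.range (A.submatrix id g) = (LinearMap.funLeft R R g) '' Set.range A := by
    ext v
    constructor
    · rintro ⟨i, rfl⟩; exact ⟨A i, ⟨i, rfl⟩, rfl⟩
    · rintro ⟨u, ⟨i, rfl⟩, rfl⟩; exact ⟨i, rfl⟩
  show Module.finrank R (Submodule.span R (Set.range (A.submatrix id g))) ≤
    Module.finrank R (Submodule.span R (Set.range A))
  rw [h, Submodule.span_image]
  exact (Submodule.finrank_map_le _ _)

lemma myRank_submatrix_row_le {m n k : Type*} [Fintype m] [Fintype n] [Fintype k]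
    (A : Matrix m n R) (f : k → m) :
    (A.submatrix f id).rank ≤ A.rank := by
  classical
  rw [Matrix.rank_eq_finrank_span_row, Matrix.rank_eq_finrank_span_row]
  apply Submodule.finrank_mono
  apply Submodule.span_mono
  rintro v ⟨i, rfl⟩
  exact ⟨f i, rfl⟩

lemma myRank_submatrix_le {m n k k' : Type*} [Fintype m] [Fintype n] [Fintype k] [Fintype k']
    (A : Matrix m n R) (f : k → m) (g : k' → n) :
    (A.submatrix f g).rank ≤ A.rank := by
  have h : A.submatrix f g = (A.submatrix f id).submatrix id g := rfl
  rw [h]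
  exact le_trans (myRank_submatrix_col_le _ _) (myRank_submatrix_row_le _ _)

lemma myRank_eq_card_of_det_ne_zero {k : Type*} [Fintype k] [DecidableEq k]
    (A : Matrix k k R) (h : A.det ≠ 0) : A.rank = Fintype.card k :=
  Matrix.rank_of_isUnit A ((Matrix.isUnit_iff_isUnit_det A).mpr h.isUnit)

lemma myRank_lt_card_of_det_eq_zero {k : Type*} [Fintype k] [DecidableEq k]
    (A : Matrix k k R) (h : A.det = 0) : A.rank < Fintype.card k := by
  obtain ⟨v, hv, hv0⟩ := (Matrix.exists_mulVec_eq_zero_iff).mpr h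
  have hker : v ∈ LinearMap.ker A.mulVecLin := by simpa using hv0
  have hkerpos : 0 < Module.finrank R (LinearMap.ker A.mulVecLin) := by
    rw [Module.finrank_pos_iff_exists_ne_zero]
    exact ⟨⟨v, hker⟩, by simpa [Submodule.mk_eq_zero] using hv⟩
  have hsum := A.mulVecLin.finrank_range_add_finrank_ker
  rw [Module.finrank_pi] at hsum
  rw [Matrix.rank]
  omega

/-- If some square `ι`-indexed submatrix has nonzero determinant and `card ι = l`,
then the `l`-row matrix has full row rank. -/
lemma myRank_eq_of_minor {l : ℕ} {cols ι : Type*} [Fintype cols] [Fintype ι] [DecidableEq ι]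
    (N : Matrix (Fin l) cols R) (f : ι → Fin l) (g : ι → cols)
    (hcard : Fintype.card ι = l) (hdet : (N.submatrix f g).det ≠ 0) : N.rank = l := by
  have h1 : (N.submatrix f g).rank = l := by
    rw [myRank_eq_card_of_det_ne_zero _ hdet, hcard]
  have h2 := myRank_submatrix_le N f g
  have h3 := N.rank_le_card_height
  rw [Fintype.card_fin] at h3
  omega

lemma exists_eval_ne_zero {σ : Type} {p : MvPolynomial σ ℝ} (hp : p ≠ 0) :
    ∃ x : σ → ℝ, MvPolynomial.eval x p ≠ 0 := by
  by_contra h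
  push_neg at h
  exact hp (MvPolynomial.funext fun x => by simpa using h x)

end Helpers

section CRHelpers

variable {R : Type*} [CommRing R]

lemma myCoeff_prod {ι : Type*} (s : Finset ι) (f : ι → R[X]) (d : ι → ℕ)
    (h : ∀ i ∈ s, (f i).natDegree ≤ d i) :
    (∏ i ∈ s, f i).coeff (∑ i ∈ s, d i) = ∏ i ∈ s, (f i).coeff (d i) := by
  classical
  induction s using Finset.induction_on with
  | empty => simp
  | insert a s ha ih =>
    rw [Finset.prod_insert ha, Finset.sum_insert ha, Finset.prod_insert ha]
    rw [Polynomial.coeff_mul_add_eq_of_natDegree_le (h a (Finset.mem_insert_self a s))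
      ((Polynomial.natDegree_prod_le _ _).trans
        (Finset.sum_le_sum (fun i hi => h i (Finset.mem_insert_of_mem hi))))]
    rw [ih (fun i hi => h i (Finset.mem_insert_of_mem hi))]

lemma myNatDegree_det_le {ι : Type*} [Fintype ι] [DecidableEq ι]
    (W : Matrix ι ι (Polynomial R)) (d : ι → ℕ) (h : ∀ i j, (W i j).natDegree ≤ d j) :
    W.det.natDegree ≤ ∑ j, d j := by
  rw [Matrix.det_apply]
  apply Polynomial.natDegree_sum_le_of_forall_le
  intro σ _
  have hs : Equiv.Perm.sign σ • ∏ i, W (σ i) i =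
      ((Equiv.Perm.sign σ : ℤ) : Polynomial R) * ∏ i, W (σ i) i := by
    rw [Units.smul_def, zsmul_eq_mul]
  rw [hs]
  refine (Polynomial.natDegree_mul_le).trans ?_
  rw [Polynomial.natDegree_intCast, zero_add]
  exact (Polynomial.natDegree_prod_le _ _).trans (Finset.sum_le_sum (fun i _ => h (σ i) i))

lemma myCoeff_det {ι : Type*} [Fintype ι] [DecidableEq ι]
    (W : Matrix ι ι (Polynomial R)) (d : ι → ℕ) (h : ∀ i j, (W i j).natDegree ≤ d j) :
    W.det.coeff (∑ j, d j) = (Matrix.of fun i j => (W i j).coeff (d j)).det := by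
  rw [Matrix.det_apply, Matrix.det_apply, Polynomial.finset_sum_coeff]
  refine Finset.sum_congr rfl (fun σ _ => ?_)
  have hp := myCoeff_prod Finset.univ (fun i => W (σ i) i) d (fun i _ => h (σ i) i)
  rw [Polynomial.coeff_smul, hp]
  rfl

end CRHelpers

-- === Sylvester ===


/-- The (formal-degree `k`,`k`) Sylvester-type matrix of two coefficient sequences. -/
def sylMatrix (k : ℕ) {R : Type*} [CommRing R] (fc gc : ℕ → R) :
    Matrix (Fin (2*k)) (Fin (2*k)) R :=
  Matrix.of fun i j =>
    if (i : ℕ) < k then (if (j : ℕ) ≤ k + (i : ℕ) then fc (k + (i : ℕ) - (j : ℕ)) else 0)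
    else (if (j : ℕ) ≤ (i : ℕ) then gc ((i : ℕ) - (j : ℕ)) else 0)

lemma sylMatrix_map {k : ℕ} {R S : Type*} [CommRing R] [CommRing S] (φ : R →+* S)
    (fc gc : ℕ → R) :
    (sylMatrix k fc gc).map φ = sylMatrix k (φ ∘ fc) (φ ∘ gc) := by
  ext i j
  simp [sylMatrix, apply_ite φ]

lemma sum_row_helper {F : Type*} [Field F] (p : F[X]) (lam : F) (D N M : ℕ)
    (hDN : D < N) (hNM : N ≤ M + 1) (hdeg : p.natDegree ≤ D) :
    ∑ j ∈ Finset.range N, (if j ≤ D then p.coeff (D - j) * lam ^ (M - j) else 0) =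
      lam ^ (M - D) * p.eval lam := by
  rw [← Finset.sum_subset (Finset.range_subset_range.mpr (show D + 1 ≤ N from hDN))
    (fun j _ hj => by
      rw [if_neg]
      simp only [Finset.mem_range] at hj
      omega)]
  have h1 : ∀ j ∈ Finset.range (D + 1),
      (if j ≤ D then p.coeff (D - j) * lam ^ (M - j) else 0) =
        p.coeff (D - j) * lam ^ (M - j) := by
    intro j hj
    rw [if_pos]
    simp only [Finset.mem_range] at hj
    omega
  rw [Finset.sum_congr rfl h1]
  rw [← Finset.sum_range_reflect]
  have h2 : ∀ t ∈ Finset.range (D + 1),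
      p.coeff (D - (D + 1 - 1 - t)) * lam ^ (M - (D + 1 - 1 - t)) =
        lam ^ (M - D) * (p.coeff t * lam ^ t) := by
    intro t ht
    simp only [Finset.mem_range] at ht
    have e1 : D - (D + 1 - 1 - t) = t := by omega
    have e2 : M - (D + 1 - 1 - t) = (M - D) + t := by omega
    rw [e1, e2, pow_add]
    ring
  rw [Finset.sum_congr rfl h2, ← Finset.mul_sum]
  congr 1
  exact (Polynomial.eval_eq_sum_range' (Nat.lt_succ_of_le hdeg) lam).symm

/-- If two polynomials of (natural) degree at most `k ≥ 1` have a common root, their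
Sylvester matrix is singular. -/
lemma sylMatrix_det_eq_zero {k : ℕ} (hk : 1 ≤ k) {F : Type*} [Field F]
    (f g : F[X]) (hf : f.natDegree ≤ k) (hg : g.natDegree ≤ k) (lam : F)
    (hfr : f.eval lam = 0) (hgr : g.eval lam = 0) :
    (sylMatrix k f.coeff g.coeff).det = 0 := by
  classical
  apply (Matrix.exists_mulVec_eq_zero_iff).mp
  refine ⟨fun j => lam ^ (2 * k - 1 - (j : ℕ)), ?_, ?_⟩
  · intro h
    have h0 := congrFun h ⟨2 * k - 1, by omega⟩
    simp only [Pi.zero_apply] at h0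
    rw [show 2 * k - 1 - (2 * k - 1) = 0 by omega, pow_zero] at h0
    exact one_ne_zero h0
  · funext i
    rw [Matrix.mulVec, Pi.zero_apply]
    show (∑ j : Fin (2 * k), sylMatrix k f.coeff g.coeff i j * lam ^ (2 * k - 1 - (j : ℕ))) = 0
    by_cases hi : (i : ℕ) < k
    · have : ∀ j : Fin (2 * k),
          sylMatrix k f.coeff g.coeff i j * lam ^ (2 * k - 1 - (j : ℕ)) =
            (fun jj : ℕ => if jj ≤ k + (i : ℕ) then
              f.coeff (k + (i : ℕ) - jj) * lam ^ (2 * k - 1 - jj) else 0) (j : ℕ) := by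
        intro j
        simp only [sylMatrix, Matrix.of_apply, if_pos hi, ite_mul, zero_mul]
      rw [Finset.sum_congr rfl (fun j _ => this j),
        Fin.sum_univ_eq_sum_range (fun jj : ℕ => if jj ≤ k + (i : ℕ) then
          f.coeff (k + (i : ℕ) - jj) * lam ^ (2 * k - 1 - jj) else 0) (2 * k)]
      rw [sum_row_helper f lam (k + (i : ℕ)) (2 * k) (2 * k - 1) (by omega) (by omega)
        (by omega)]
      rw [hfr, mul_zero]
    · have : ∀ j : Fin (2 * k),
          sylMatrix k f.coeff g.coeff i j * lam ^ (2 * k - 1 - (j : ℕ)) =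
            (fun jj : ℕ => if jj ≤ (i : ℕ) then
              g.coeff ((i : ℕ) - jj) * lam ^ (2 * k - 1 - jj) else 0) (j : ℕ) := by
        intro j
        simp only [sylMatrix, Matrix.of_apply, if_neg hi, ite_mul, zero_mul]
      rw [Finset.sum_congr rfl (fun j _ => this j),
        Fin.sum_univ_eq_sum_range (fun jj : ℕ => if jj ≤ (i : ℕ) then
          g.coeff ((i : ℕ) - jj) * lam ^ (2 * k - 1 - jj) else 0) (2 * k)]
      rw [sum_row_helper g lam (i : ℕ) (2 * k) (2 * k - 1) (i.isLt) (by omega)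
        (by omega)]
      rw [hgr, mul_zero]

/-- The Sylvester matrix of `X^k` and `1` is the identity. -/
lemma sylMatrix_monomial_one {k : ℕ} {F : Type*} [Field F] :
    sylMatrix k (fun t => if t = k then (1 : F) else 0) (fun t => if t = 0 then 1 else 0) =
      (1 : Matrix (Fin (2*k)) (Fin (2*k)) F) := by
  ext i j
  rw [Matrix.one_apply]
  simp only [sylMatrix, Matrix.of_apply]
  by_cases hi : (i : ℕ) < k
  · rw [if_pos hi]
    by_cases hij : i = j
    · subst hij
      rw [if_pos (by omega), if_pos (by omega), if_pos rfl]
    · rw [if_neg hij]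
      have hne : (i : ℕ) ≠ (j : ℕ) := fun h => hij (Fin.ext h)
      by_cases hj : (j : ℕ) ≤ k + (i : ℕ)
      · rw [if_pos hj, if_neg (by omega)]
      · rw [if_neg hj]
  · rw [if_neg hi]
    by_cases hij : i = j
    · subst hij
      rw [if_pos (le_refl _), if_pos (by omega), if_pos rfl]
    · rw [if_neg hij]
      have hne : (i : ℕ) ≠ (j : ℕ) := fun h => hij (Fin.ext h)
      by_cases hj : (j : ℕ) ≤ (i : ℕ)
      · rw [if_pos hj, if_neg (by omega)]
      · rw [if_neg hj]


-- === statement defs ===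

/-- A set `V ⊆ ℝ^N` is an algebraic variety if it is the common zero locus of
finitely many polynomials. -/
def IsAlgVariety {ι F : Type} [CommRing F] (V : Set (ι → F)) : Prop :=
  ∃ (k : ℕ) (p : Fin k → MvPolynomial ι F),
    V = {x | ∀ i, MvPolynomial.eval x (p i) = 0}

/-- A set `S ⊆ ℝ^N` is generic if its complement is contained in a proper
algebraic variety. -/
def IsGeneric {ι F : Type} [CommRing F] (S : Set (ι → F)) : Prop :=
  ∃ V : Set (ι → F), IsAlgVariety V ∧ V ≠ Set.univ ∧ Sᶜ ⊆ V

/-- Index set of the coordinates of `Σ_{ℓ,n,m} = ℝ^{ℓ×n} × ℝ^{ℓ×n} × ℝ^{ℓ×m} ≅ ℝ^{ℓ(2n+m)}`. -/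
abbrev SigmaIdx (l n m : ℕ) : Type := (Fin l × Fin n) ⊕ (Fin l × Fin n) ⊕ (Fin l × Fin m)

/-- The matrix `E` of a point of `Σ_{ℓ,n,m}`. -/
def Emat {l n m : ℕ} (x : SigmaIdx l n m → ℝ) : Matrix (Fin l) (Fin n) ℝ :=
  Matrix.of fun i j => x (Sum.inl (i, j))

/-- The matrix `A` of a point of `Σ_{ℓ,n,m}`. -/
def Amat {l n m : ℕ} (x : SigmaIdx l n m → ℝ) : Matrix (Fin l) (Fin n) ℝ :=
  Matrix.of fun i j => x (Sum.inr (Sum.inl (i, j)))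

/-- The matrix `B` of a point of `Σ_{ℓ,n,m}`. -/
def Bmat {l n m : ℕ} (x : SigmaIdx l n m → ℝ) : Matrix (Fin l) (Fin m) ℝ :=
  Matrix.of fun i j => x (Sum.inr (Sum.inr (i, j)))

/-- The complex matrix `[λE − A, B] ∈ ℂ^{ℓ×(n+m)}` (real matrices viewed as complex). -/
noncomputable def pencilC {l n m : ℕ} (E A : Matrix (Fin l) (Fin n) ℝ)
    (B : Matrix (Fin l) (Fin m) ℝ) (lam : ℂ) :
    Matrix (Fin l) (Fin n ⊕ Fin m) ℂ :=
  Matrix.fromCols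
    (Matrix.of fun i j => lam * (E i j : ℂ) - (A i j : ℂ))
    (Matrix.of fun i j => (B i j : ℂ))

-- === master polynomial matrices ===

section Masters

variable {l n m : ℕ}

/-- Short name for the coordinate ring of `Σ_{l,n,m}`. -/
abbrev SS (l n m : ℕ) := MvPolynomial (SigmaIdx l n m) ℝ

/-- The generic matrix `[E, B]` over the coordinate ring. -/
noncomputable def EBvar (l n m : ℕ) : Matrix (Fin l) (Fin n ⊕ Fin m) (SS l n m) :=
  Matrix.of fun i c =>
    Sum.elim (fun a => MvPolynomial.X (Sum.inl (i, a)))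
      (fun b => MvPolynomial.X (Sum.inr (Sum.inr (i, b)))) c

/-- The generic matrix `[E, A, B]` over the coordinate ring. -/
noncomputable def EABvar (l n m : ℕ) :
    Matrix (Fin l) (Fin n ⊕ (Fin n ⊕ Fin m)) (SS l n m) :=
  Matrix.of fun i c =>
    Sum.elim (fun a => MvPolynomial.X (Sum.inl (i, a)))
      (Sum.elim (fun a => MvPolynomial.X (Sum.inr (Sum.inl (i, a))))
        (fun b => MvPolynomial.X (Sum.inr (Sum.inr (i, b))))) c

/-- The generic pencil `[λE − A, B]` over `R[λ]`. -/
noncomputable def pencilPoly {R : Type*} [CommRing R] (E' A' : Matrix (Fin l) (Fin n) R)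
    (B' : Matrix (Fin l) (Fin m) R) : Matrix (Fin l) (Fin n ⊕ Fin m) (Polynomial R) :=
  Matrix.of fun i c =>
    Sum.elim (fun a => Polynomial.C (E' i a) * Polynomial.X - Polynomial.C (A' i a))
      (fun b => Polynomial.C (B' i b)) c

/-- The generic matrices `E`, `A`, `B` over the coordinate ring. -/
noncomputable def Evar (l n m : ℕ) : Matrix (Fin l) (Fin n) (SS l n m) :=
  Matrix.of fun i j => MvPolynomial.X (Sum.inl (i, j))

noncomputable def Avar (l n m : ℕ) : Matrix (Fin l) (Fin n) (SS l n m) :=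
  Matrix.of fun i j => MvPolynomial.X (Sum.inr (Sum.inl (i, j)))

noncomputable def Bvar (l n m : ℕ) : Matrix (Fin l) (Fin m) (SS l n m) :=
  Matrix.of fun i j => MvPolynomial.X (Sum.inr (Sum.inr (i, j)))

/-- The master pencil over `SS[λ]`. -/
noncomputable def PP (l n m : ℕ) : Matrix (Fin l) (Fin n ⊕ Fin m) (Polynomial (SS l n m)) :=
  pencilPoly (Evar l n m) (Avar l n m) (Bvar l n m)

lemma EBvar_eval (x : SigmaIdx l n m → ℝ) :
    (EBvar l n m).map (MvPolynomial.eval x) = Matrix.fromCols (Emat x) (Bmat x) := by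
  ext i c
  cases c with
  | inl a => simp [EBvar, Emat, Matrix.fromCols]
  | inr b => simp [EBvar, Bmat, Matrix.fromCols]

lemma EABvar_eval (x : SigmaIdx l n m → ℝ) :
    (EABvar l n m).map (MvPolynomial.eval x) =
      Matrix.fromCols (Emat x) (Matrix.fromCols (Amat x) (Bmat x)) := by
  ext i c
  rcases c with a | (a | b)
  · simp [EABvar, Emat, Matrix.fromCols]
  · simp [EABvar, Amat, Matrix.fromCols]
  · simp [EABvar, Bmat, Matrix.fromCols]

/-- Complex evaluation hom of the master pencil ring at a point `x` and `λ`. -/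
noncomputable def chiHom {l n m : ℕ} (x : SigmaIdx l n m → ℝ) (lam : ℂ) :
    Polynomial (SS l n m) →+* ℂ :=
  (Polynomial.evalRingHom lam).comp
    (Polynomial.mapRingHom ((algebraMap ℝ ℂ).comp (MvPolynomial.eval x)))

lemma PP_chi (x : SigmaIdx l n m → ℝ) (lam : ℂ) :
    (PP l n m).map (chiHom x lam) = pencilC (Emat x) (Amat x) (Bmat x) lam := by
  have h3 : chiHom x lam Polynomial.X = lam := by simp [chiHom]
  ext i c
  cases c with
  | inl a =>
      have h1 : chiHom x lam (Polynomial.C (Evar l n m i a)) = ((Emat x i a : ℝ) : ℂ) := by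
        simp [chiHom, Evar, Emat]
      have h2 : chiHom x lam (Polynomial.C (Avar l n m i a)) = ((Amat x i a : ℝ) : ℂ) := by
        simp [chiHom, Avar, Amat]
      show chiHom x lam ((PP l n m) i (Sum.inl a)) = _
      have hPP : (PP l n m) i (Sum.inl a) =
          Polynomial.C (Evar l n m i a) * Polynomial.X - Polynomial.C (Avar l n m i a) := rfl
      rw [hPP, map_sub, _root_.map_mul, h1, h2, h3]
      show _ = pencilC (Emat x) (Amat x) (Bmat x) lam i (Sum.inl a)
      rw [pencilC, Matrix.fromCols_apply_inl]
      show _ = lam * ((Emat x i a : ℝ) : ℂ) - ((Amat x i a : ℝ) : ℂ)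
      ring
  | inr b =>
      have h1 : chiHom x lam (Polynomial.C (Bvar l n m i b)) = ((Bmat x i b : ℝ) : ℂ) := by
        simp [chiHom, Bvar, Bmat]
      show chiHom x lam ((PP l n m) i (Sum.inr b)) = _
      have hPP : (PP l n m) i (Sum.inr b) = Polynomial.C (Bvar l n m i b) := rfl
      rw [hPP, h1]
      show _ = pencilC (Emat x) (Amat x) (Bmat x) lam i (Sum.inr b)
      rw [pencilC, Matrix.fromCols_apply_inr]
      rfl

end Masters



section MoreMasters

variable {l n m : ℕ}

lemma natDegree_linear_le {R : Type*} [CommRing R] (e a : R) :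
    (Polynomial.C e * Polynomial.X - Polynomial.C a).natDegree ≤ 1 := by
  refine (Polynomial.natDegree_sub_le _ _).trans ?_
  rw [max_le_iff]
  exact ⟨(Polynomial.natDegree_C_mul_le _ _).trans Polynomial.natDegree_X_le,
    by simp [Polynomial.natDegree_C]⟩

lemma PP_evalPoly (x : SigmaIdx l n m → ℝ) :
    (PP l n m).map (Polynomial.mapRingHom (MvPolynomial.eval x)) =
      pencilPoly (Emat x) (Amat x) (Bmat x) := by
  refine Matrix.ext (fun i c => ?_)
  cases c with
  | inl a =>
      show Polynomial.mapRingHom (MvPolynomial.eval x)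
        (Polynomial.C (Evar l n m i a) * Polynomial.X - Polynomial.C (Avar l n m i a)) = _
      rw [Polynomial.coe_mapRingHom, Polynomial.map_sub, Polynomial.map_mul, Polynomial.map_C,
        Polynomial.map_X, Polynomial.map_C]
      simp [Evar, Avar, Emat, Amat, pencilPoly]
  | inr b =>
      show Polynomial.mapRingHom (MvPolynomial.eval x)
        (Polynomial.C (Bvar l n m i b)) = _
      rw [Polynomial.coe_mapRingHom, Polynomial.map_C]
      simp [Bvar, Bmat, pencilPoly]

/-- Degrees of entries of the pencil are bounded by `1` on pencil columns and `0`
on `B` columns. -/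
lemma PP_natDegree_le (i : Fin l) (c : Fin n ⊕ Fin m) :
    ((PP l n m) i c).natDegree ≤ Sum.elim (fun _ : Fin n => 1) (fun _ : Fin m => 0) c := by
  rcases c with a | b
  · exact natDegree_linear_le _ _
  · simp [PP, pencilPoly, Polynomial.natDegree_C]

-- === controllable set ===

/-- The set of completely controllable systems. -/
def ctrlSet (l n m : ℕ) : Set (SigmaIdx l n m → ℝ) :=
  {x : SigmaIdx l n m → ℝ |
      ∀ lam : ℂ,
        (Matrix.fromCols (Emat x) (Matrix.fromCols (Amat x) (Bmat x))).rank =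
          (Matrix.fromCols (Emat x) (Bmat x)).rank ∧
        (Matrix.fromCols (Emat x) (Bmat x)).rank =
          (pencilC (Emat x) (Amat x) (Bmat x) lam).rank}

/-- If some polynomial is nonzero somewhere and its nonvanishing implies membership,
the set is generic. -/
lemma generic_of_poly {l n m : ℕ} {Sset : Set (SigmaIdx l n m → ℝ)} (q : SS l n m)
    (hw : ∃ w, MvPolynomial.eval w q ≠ 0)
    (hS : ∀ x, MvPolynomial.eval x q ≠ 0 → x ∈ Sset) : IsGeneric Sset := by
  refine ⟨{x | MvPolynomial.eval x q = 0}, ⟨1, fun _ => q, by ext x; simp⟩, ?_, ?_⟩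
  · obtain ⟨w, hw⟩ := hw
    intro h
    exact hw (by simpa using (h ▸ Set.mem_univ w : w ∈ {x | MvPolynomial.eval x q = 0}))
  · intro x hx
    by_contra hq
    exact hx (hS x hq)

/-- Easy case of genericity: `l ≤ m`. -/
lemma generic_easy (l n m : ℕ) (hml : l ≤ m) : IsGeneric (ctrlSet l n m) := by
  classical
  set g0 : Fin l → Fin n ⊕ Fin m := fun i => Sum.inr (Fin.castLE hml i) with hg0
  have heval : ∀ x : SigmaIdx l n m → ℝ,
      MvPolynomial.eval x (((EBvar l n m).submatrix id g0).det) =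
        (((Matrix.fromCols (Emat x) (Bmat x)).submatrix id g0)).det := by
    intro x
    rw [RingHom.map_det, ← EBvar_eval x]
    rfl
  apply generic_of_poly (((EBvar l n m).submatrix id g0).det)
  · set w : SigmaIdx l n m → ℝ := fun idx => match idx with
      | Sum.inr (Sum.inr (i, j)) => if (i : ℕ) = (j : ℕ) then 1 else 0
      | _ => 0 with hwdef
    refine ⟨w, ?_⟩
    rw [heval]
    have h1 : ((Matrix.fromCols (Emat w) (Bmat w)).submatrix id g0) =
        (1 : Matrix (Fin l) (Fin l) ℝ) := by
      ext i j
      show Bmat w i (Fin.castLE hml j) = _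
      rw [Matrix.one_apply]
      have hw1 : Bmat w i (Fin.castLE hml j) =
          if (i : ℕ) = ((Fin.castLE hml j : Fin m) : ℕ) then (1 : ℝ) else 0 := rfl
      rw [hw1, Fin.coe_castLE]
      by_cases h : i = j
      · subst h; rw [if_pos rfl, if_pos rfl]
      · rw [if_neg (fun hh => h (Fin.ext hh)), if_neg h]
    rw [h1, Matrix.det_one]
    exact one_ne_zero
  · intro x hq
    rw [heval] at hq
    have hEB : (Matrix.fromCols (Emat x) (Bmat x)).rank = l :=
      myRank_eq_of_minor _ id g0 (Fintype.card_fin l) hq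
    have hEAB : (Matrix.fromCols (Emat x) (Matrix.fromCols (Amat x) (Bmat x))).rank = l := by
      refine myRank_eq_of_minor _ id (fun i => Sum.inr (Sum.inr (Fin.castLE hml i)))
        (Fintype.card_fin l) ?_
      have : (Matrix.fromCols (Emat x) (Matrix.fromCols (Amat x) (Bmat x))).submatrix id
          (fun i => Sum.inr (Sum.inr (Fin.castLE hml i))) =
          (Matrix.fromCols (Emat x) (Bmat x)).submatrix id g0 := rfl
      rw [this]
      exact hq
    intro lam
    have hpc : ((pencilC (Emat x) (Amat x) (Bmat x) lam).submatrix id g0) =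
        ((Matrix.fromCols (Emat x) (Bmat x)).submatrix id g0).map (algebraMap ℝ ℂ) := by
      ext i j
      rfl
    have hpencil : (pencilC (Emat x) (Amat x) (Bmat x) lam).rank = l := by
      refine myRank_eq_of_minor _ id g0 (Fintype.card_fin l) ?_
      have hd : ((((Emat x).fromCols (Bmat x)).submatrix id g0).map ⇑(algebraMap ℝ ℂ)).det =
          algebraMap ℝ ℂ ((((Emat x).fromCols (Bmat x)).submatrix id g0).det) :=
        (RingHom.map_det _ _).symm
      rw [hpc, hd]
      simpa using hq
    exact ⟨hEAB.trans hEB.symm, hEB.trans hpencil.symm⟩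

/-- If some nonzero polynomial vanishes identically on `S`, then `S` is not generic. -/
lemma not_generic_of_vanishing {l n m : ℕ} {Sset : Set (SigmaIdx l n m → ℝ)} (g : SS l n m)
    (hg : g ≠ 0) (hvan : ∀ x ∈ Sset, MvPolynomial.eval x g = 0) : ¬ IsGeneric Sset := by
  rintro ⟨V, ⟨kk, p, rfl⟩, hne, hsub⟩
  obtain ⟨y, hy⟩ : ∃ y, y ∉ {x | ∀ i, MvPolynomial.eval x (p i) = 0} := by
    by_contra h
    push_neg at h
    exact hne (Set.eq_univ_of_forall h)
  rw [Set.mem_setOf_eq] at hy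
  push_neg at hy
  obtain ⟨i, hi⟩ := hy
  have hpi : p i ≠ 0 := fun h => hi (by simp [h])
  obtain ⟨z, hz⟩ := exists_eval_ne_zero (mul_ne_zero hg hpi)
  rw [_root_.map_mul] at hz
  obtain ⟨hz1, hz2⟩ := mul_ne_zero_iff.mp hz
  by_cases hzS : z ∈ Sset
  · exact hz1 (hvan z hzS)
  · exact hz2 (hsub hzS i)

/-- `l > n+m`: not generic. -/
lemma not_generic_big (l n m : ℕ) (hn : 1 ≤ n) (hlt : n + m < l) :
    ¬ IsGeneric (ctrlSet l n m) := by
  classical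
  set rsel : Fin (n + m + 1) → Fin l := Fin.castLE (by omega) with hrsel
  set csel : Fin (n + m + 1) → Fin n ⊕ (Fin n ⊕ Fin m) := fun j =>
    if h : (j : ℕ) < n then Sum.inl ⟨j, h⟩
    else if h2 : (j : ℕ) < n + m then Sum.inr (Sum.inr ⟨(j : ℕ) - n, by omega⟩)
    else Sum.inr (Sum.inl ⟨0, hn⟩) with hcsel
  have heval : ∀ x : SigmaIdx l n m → ℝ,
      MvPolynomial.eval x (((EABvar l n m).submatrix rsel csel).det) =
        (((Matrix.fromCols (Emat x) (Matrix.fromCols (Amat x) (Bmat x))).submatrix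
          rsel csel)).det := by
    intro x
    rw [RingHom.map_det, ← EABvar_eval x]
    rfl
  apply not_generic_of_vanishing (((EABvar l n m).submatrix rsel csel).det)
  · -- nonzero at a witness
    intro h0
    set w : SigmaIdx l n m → ℝ := fun idx => match idx with
      | Sum.inl (i, j) => if (i : ℕ) = (j : ℕ) then 1 else 0
      | Sum.inr (Sum.inl (i, j)) => if (i : ℕ) = n + m ∧ (j : ℕ) = 0 then 1 else 0
      | Sum.inr (Sum.inr (i, j)) => if (i : ℕ) = n + (j : ℕ) then 1 else 0 with hwdef
    have hw := heval w
    rw [h0, map_zero] at hw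
    have h1 : ((Matrix.fromCols (Emat w) (Matrix.fromCols (Amat w) (Bmat w))).submatrix
        rsel csel) = (1 : Matrix (Fin (n + m + 1)) (Fin (n + m + 1)) ℝ) := by
      ext r c
      rw [Matrix.one_apply]
      by_cases h : (c : ℕ) < n
      · have hc : csel c = Sum.inl ⟨(c : ℕ), h⟩ := by rw [hcsel]; exact dif_pos h
        have : (Matrix.fromCols (Emat w) (Matrix.fromCols (Amat w) (Bmat w))).submatrix
            rsel csel r c = if ((rsel r : Fin l) : ℕ) = (c : ℕ) then (1 : ℝ) else 0 := by
          rw [Matrix.submatrix_apply, hc]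
          rfl
        rw [this]
        have hr : ((rsel r : Fin l) : ℕ) = (r : ℕ) := rfl
        rw [hr]
        by_cases hrc : r = c
        · subst hrc; rw [if_pos rfl, if_pos rfl]
        · rw [if_neg (fun hh => hrc (Fin.ext hh)), if_neg hrc]
      · by_cases h2 : (c : ℕ) < n + m
        · have hc : csel c = Sum.inr (Sum.inr ⟨(c : ℕ) - n, by omega⟩) := by
            rw [hcsel]
            exact (dif_neg h).trans (dif_pos h2)
          have : (Matrix.fromCols (Emat w) (Matrix.fromCols (Amat w) (Bmat w))).submatrix
              rsel csel r c = if ((rsel r : Fin l) : ℕ) = n + ((c : ℕ) - n) then (1 : ℝ)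
                else 0 := by
            rw [Matrix.submatrix_apply, hc]
            rfl
          rw [this]
          have hr : ((rsel r : Fin l) : ℕ) = (r : ℕ) := rfl
          rw [hr, show n + ((c : ℕ) - n) = (c : ℕ) by omega]
          by_cases hrc : r = c
          · subst hrc; rw [if_pos rfl, if_pos rfl]
          · rw [if_neg (fun hh => hrc (Fin.ext hh)), if_neg hrc]
        · have hc : csel c = Sum.inr (Sum.inl ⟨0, hn⟩) := by
            rw [hcsel]
            exact (dif_neg h).trans (dif_neg h2)
          have hcnm : (c : ℕ) = n + m := by omega
          have : (Matrix.fromCols (Emat w) (Matrix.fromCols (Amat w) (Bmat w))).submatrix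
              rsel csel r c = if ((rsel r : Fin l) : ℕ) = n + m ∧ (0 : ℕ) = 0 then (1 : ℝ)
                else 0 := by
            rw [Matrix.submatrix_apply, hc]
            rfl
          rw [this]
          have hr : ((rsel r : Fin l) : ℕ) = (r : ℕ) := rfl
          rw [hr]
          by_cases hrc : r = c
          · subst hrc; rw [if_pos ⟨hcnm, rfl⟩, if_pos rfl]
          · rw [if_neg, if_neg hrc]
            rintro ⟨hh, -⟩
            exact hrc (Fin.ext (by omega))
    rw [h1, Matrix.det_one] at hw
    exact one_ne_zero hw.symm
  · -- vanishes on the controllable set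
    intro x hx
    by_contra h0
    rw [heval] at h0
    have hrank : (Matrix.fromCols (Emat x) (Matrix.fromCols (Amat x) (Bmat x))).rank
        ≤ n + m := by
      obtain ⟨h1, h2⟩ := hx 0
      rw [h1]
      refine le_trans (Matrix.rank_le_card_width _) ?_
      simp
    have hsubrank := myRank_eq_card_of_det_ne_zero _ h0
    rw [Fintype.card_fin] at hsubrank
    have hle := myRank_submatrix_le
      (Matrix.fromCols (Emat x) (Matrix.fromCols (Amat x) (Bmat x))) rsel csel
    omega

/-- `l = n+m`: not generic. -/
lemma not_generic_eq (l n m : ℕ) (hn : 1 ≤ n) (hm : 1 ≤ m) (heq : n + m = l) :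
    ¬ IsGeneric (ctrlSet l n m) := by
  classical
  set eC : Fin n ⊕ Fin m ≃ Fin l := finSumFinEquiv.trans (finCongr heq) with heC
  have hcoeL : ∀ a : Fin n, ((eC (Sum.inl a) : Fin l) : ℕ) = (a : ℕ) := by
    intro a; simp [heC]
  have hcoeR : ∀ b : Fin m, ((eC (Sum.inr b) : Fin l) : ℕ) = n + (b : ℕ) := by
    intro b; simp [heC]
  have hcard : Fintype.card (Fin n ⊕ Fin m) = l := by simp [heq]
  have heval : ∀ x : SigmaIdx l n m → ℝ,
      MvPolynomial.eval x (((EBvar l n m).submatrix eC id).det) =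
        (((Matrix.fromCols (Emat x) (Bmat x)).submatrix eC id)).det := by
    intro x
    rw [RingHom.map_det, ← EBvar_eval x]
    rfl
  apply not_generic_of_vanishing (((EBvar l n m).submatrix eC id).det)
  · -- nonzero at a witness
    intro h0
    set w : SigmaIdx l n m → ℝ := fun idx => match idx with
      | Sum.inl (i, j) => if (i : ℕ) = (j : ℕ) then 1 else 0
      | Sum.inr (Sum.inl (i, j)) => 0
      | Sum.inr (Sum.inr (i, j)) => if (i : ℕ) = n + (j : ℕ) then 1 else 0 with hwdef
    have hw := heval w
    rw [h0, map_zero] at hw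
    have h1 : ((Matrix.fromCols (Emat w) (Bmat w)).submatrix eC id) =
        (1 : Matrix (Fin n ⊕ Fin m) (Fin n ⊕ Fin m) ℝ) := by
      ext ρ c
      rw [Matrix.submatrix_apply, Matrix.one_apply, id_eq]
      cases c with
      | inl a =>
          have hent : (Matrix.fromCols (Emat w) (Bmat w)) (eC ρ) (Sum.inl a) =
              if ((eC ρ : Fin l) : ℕ) = (a : ℕ) then (1 : ℝ) else 0 := rfl
          rw [hent]
          cases ρ with
          | inl r =>
              rw [hcoeL r]
              by_cases hra : r = a
              · subst hra; rw [if_pos rfl, if_pos rfl]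
              · rw [if_neg (fun hh => hra (Fin.ext hh)),
                  if_neg (fun hh => hra (Sum.inl.inj hh))]
          | inr rb =>
              rw [hcoeR rb]
              rw [if_neg (by omega), if_neg (by simp)]
      | inr b =>
          have hent : (Matrix.fromCols (Emat w) (Bmat w)) (eC ρ) (Sum.inr b) =
              if ((eC ρ : Fin l) : ℕ) = n + (b : ℕ) then (1 : ℝ) else 0 := rfl
          rw [hent]
          cases ρ with
          | inl r =>
              rw [hcoeL r]
              rw [if_neg (by omega), if_neg (by simp)]
          | inr rb =>
              rw [hcoeR rb]
              by_cases hrb : rb = b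
              · subst hrb; rw [if_pos rfl, if_pos rfl]
              · rw [if_neg (fun hh => hrb (Fin.ext (by omega))),
                  if_neg (fun hh => hrb (Sum.inr.inj hh))]
    rw [h1, Matrix.det_one] at hw
    exact one_ne_zero hw.symm
  · -- vanishes on the controllable set
    intro x hx
    by_contra h0
    rw [heval] at h0
    have hEB : (Matrix.fromCols (Emat x) (Bmat x)).rank = l :=
      myRank_eq_of_minor _ eC id hcard h0
    -- the complex pencil as a polynomial matrix
    set Pc : Matrix (Fin l) (Fin n ⊕ Fin m) (Polynomial ℂ) :=
      pencilPoly ((Emat x).map (algebraMap ℝ ℂ)) ((Amat x).map (algebraMap ℝ ℂ))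
        ((Bmat x).map (algebraMap ℝ ℂ)) with hPc
    set W : Matrix (Fin n ⊕ Fin m) (Fin n ⊕ Fin m) (Polynomial ℂ) := Pc.submatrix eC id with hW
    set dpoly := W.det with hd
    set dcol : Fin n ⊕ Fin m → ℕ := Sum.elim (fun _ => 1) (fun _ => 0) with hdcol
    have hsum : (∑ c : Fin n ⊕ Fin m, dcol c) = n := by
      rw [Fintype.sum_sum_type]
      simp [hdcol]
    have hdeg : ∀ i c, (W i c).natDegree ≤ dcol c := by
      intro i c
      cases c with
      | inl a =>
          refine (Polynomial.natDegree_sub_le _ _).trans ?_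
          simp only [Polynomial.natDegree_C, hdcol, Sum.elim_inl]
          rw [max_le_iff]
          exact ⟨(Polynomial.natDegree_C_mul_le _ _).trans Polynomial.natDegree_X_le,
            (Polynomial.natDegree_C _).le.trans (Nat.zero_le _)⟩
      | inr b =>
          simp [hW, hPc, pencilPoly, hdcol]
    have hco := myCoeff_det W dcol hdeg
    have hQ : (Matrix.of fun i c => (W i c).coeff (dcol c)) =
        ((Matrix.fromCols (Emat x) (Bmat x)).submatrix eC id).map (algebraMap ℝ ℂ) := by
      ext i c
      cases c with
      | inl a =>
          show (Polynomial.C ((Emat x).map (algebraMap ℝ ℂ) (eC i) a) * Polynomial.X -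
            Polynomial.C ((Amat x).map (algebraMap ℝ ℂ) (eC i) a)).coeff 1 = _
          rw [Polynomial.coeff_sub, Polynomial.coeff_C_mul, Polynomial.coeff_X_one,
            Polynomial.coeff_C]
          simp
      | inr b =>
          show (Polynomial.C ((Bmat x).map (algebraMap ℝ ℂ) (eC i) b)).coeff 0 = _
          rw [Polynomial.coeff_C_zero]
          rfl
    have hcoeffne : dpoly.coeff n ≠ 0 := by
      rw [← hsum, hco, hQ]
      have hmd : (((Matrix.fromCols (Emat x) (Bmat x)).submatrix eC id).map
          (algebraMap ℝ ℂ)).det =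
          algebraMap ℝ ℂ (((Matrix.fromCols (Emat x) (Bmat x)).submatrix eC id).det) :=
        (RingHom.map_det _ _).symm
      rw [hmd]
      simpa using h0
    have hd0 : dpoly ≠ 0 := fun h => hcoeffne (by simp [h])
    have hdeg0 : dpoly.degree ≠ 0 := by
      have hnle : n ≤ dpoly.natDegree := Polynomial.le_natDegree_of_ne_zero hcoeffne
      rw [Polynomial.degree_eq_natDegree hd0]
      intro hcontr
      have : dpoly.natDegree = 0 := by exact_mod_cast hcontr
      omega
    obtain ⟨lam, hlam⟩ := Complex.isAlgClosed.exists_root dpoly hdeg0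
    have hmap : W.map (Polynomial.evalRingHom lam) = (pencilC (Emat x) (Amat x) (Bmat x)
        lam).submatrix eC id := by
      ext i c
      cases c with
      | inl a =>
          show Polynomial.evalRingHom lam (Polynomial.C ((Emat x).map (algebraMap ℝ ℂ) (eC i) a)
            * Polynomial.X - Polynomial.C ((Amat x).map (algebraMap ℝ ℂ) (eC i) a)) = _
          rw [map_sub, _root_.map_mul]
          simp only [Polynomial.coe_evalRingHom, Polynomial.eval_C, Polynomial.eval_X]
          show _ = lam * ((Emat x (eC i) a : ℝ) : ℂ) - ((Amat x (eC i) a : ℝ) : ℂ)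
          rw [mul_comm]
          rfl
      | inr b =>
          show Polynomial.evalRingHom lam
            (Polynomial.C ((Bmat x).map (algebraMap ℝ ℂ) (eC i) b)) = _
          simp only [Polynomial.coe_evalRingHom, Polynomial.eval_C]
          rfl
    have hdet0 : ((pencilC (Emat x) (Amat x) (Bmat x) lam).submatrix eC id).det = 0 := by
      rw [← hmap]
      have : (W.map (Polynomial.evalRingHom lam)).det = Polynomial.eval lam dpoly :=
        (RingHom.map_det (Polynomial.evalRingHom lam) W).symm
      rw [this]
      exact hlam
    have hlt := myRank_lt_card_of_det_eq_zero _ hdet0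
    rw [hcard] at hlt
    have hre := myRank_submatrix_equiv (pencilC (Emat x) (Amat x) (Bmat x) lam) eC
      (Equiv.refl _)
    rw [Equiv.coe_refl] at hre
    have hx2 := (hx lam).2
    omega

/-- Hard case of genericity: `m < l < n + m`. -/
lemma generic_hard (l n m : ℕ) (hml : m < l) (hlnm : l < n + m) :
    IsGeneric (ctrlSet l n m) := by
  classical
  set k := l - m with hkdef
  have hk1 : 1 ≤ k := by omega
  have hkn : k + 1 ≤ n := by omega
  have hkm : k + m = l := by omega
  set eL : Fin k ⊕ Fin m ≃ Fin l := finSumFinEquiv.trans (finCongr hkm) with heL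
  have hcoeL : ∀ a : Fin k, ((eL (Sum.inl a) : Fin l) : ℕ) = (a : ℕ) := by
    intro a; simp [heL]
  have hcoeR : ∀ b : Fin m, ((eL (Sum.inr b) : Fin l) : ℕ) = k + (b : ℕ) := by
    intro b; simp [heL]
  have hcard : Fintype.card (Fin k ⊕ Fin m) = l := by simp [hkm]
  set g₁ : Fin k ⊕ Fin m → Fin n ⊕ Fin m :=
    Sum.map (Fin.castLE (by omega)) id with hg₁
  set g₂ : Fin k ⊕ Fin m → Fin n ⊕ Fin m :=
    Sum.map (fun a : Fin k => (⟨(a : ℕ) + 1, by omega⟩ : Fin n)) id with hg₂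
  set dcol : Fin n ⊕ Fin m → ℕ := Sum.elim (fun _ => 1) (fun _ => 0) with hdcol
  set D₁ := ((PP l n m).submatrix eL g₁).det with hD₁
  set D₂ := ((PP l n m).submatrix eL g₂).det with hD₂
  set M₁poly := ((EBvar l n m).submatrix eL g₁).det with hM₁
  set Syl := sylMatrix k (fun t => D₁.coeff t) (fun t => D₂.coeff t) with hSyl
  set q := M₁poly * Syl.det with hq
  -- degree bounds
  have hdegsum : ∀ g : Fin k ⊕ Fin m → Fin n ⊕ Fin m, (∀ ρ : Fin k ⊕ Fin m,
      dcol (g ρ) = Sum.elim (fun _ : Fin k => 1) (fun _ : Fin m => 0) ρ) →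
      (((PP l n m).submatrix eL g).det).natDegree ≤ k := by
    intro g hg
    have h1 := myNatDegree_det_le ((PP l n m).submatrix eL g) (fun ρ => dcol (g ρ))
      (fun i j => by
        simpa [hdcol, Matrix.submatrix_apply] using PP_natDegree_le (eL i) (g j))
    refine h1.trans ?_
    have h2 : (∑ j : Fin k ⊕ Fin m, (fun ρ => dcol (g ρ)) j) = k := by
      simp only []
      rw [Finset.sum_congr rfl (fun ρ _ => hg ρ), Fintype.sum_sum_type]
      simp
    exact h2.le
  have hgd₁ : ∀ ρ : Fin k ⊕ Fin m,
      dcol (g₁ ρ) = Sum.elim (fun _ : Fin k => 1) (fun _ : Fin m => 0) ρ := by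
    rintro (a | b) <;> simp [hg₁, hdcol]
  have hgd₂ : ∀ ρ : Fin k ⊕ Fin m,
      dcol (g₂ ρ) = Sum.elim (fun _ : Fin k => 1) (fun _ : Fin m => 0) ρ := by
    rintro (a | b) <;> simp [hg₂, hdcol]
  have hdegD₁ : D₁.natDegree ≤ k := hdegsum g₁ hgd₁
  have hdegD₂ : D₂.natDegree ≤ k := hdegsum g₂ hgd₂
  -- evaluation identities
  have hevalM : ∀ x : SigmaIdx l n m → ℝ,
      MvPolynomial.eval x M₁poly =
        (((Matrix.fromCols (Emat x) (Bmat x)).submatrix eL g₁)).det := by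
    intro x
    rw [hM₁, RingHom.map_det, ← EBvar_eval x]
    rfl
  have hevalD : ∀ (x : SigmaIdx l n m → ℝ) (g : (Fin k ⊕ Fin m) → Fin n ⊕ Fin m),
      Polynomial.map (MvPolynomial.eval x) (((PP l n m).submatrix eL g).det) =
        ((pencilPoly (Emat x) (Amat x) (Bmat x)).submatrix eL g).det := by
    intro x g
    have h1 : Polynomial.map (MvPolynomial.eval x) (((PP l n m).submatrix eL g).det) =
        Polynomial.mapRingHom (MvPolynomial.eval x) (((PP l n m).submatrix eL g).det) := rfl
    rw [h1, RingHom.map_det, ← PP_evalPoly x]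
    rfl
  have hchiD : ∀ (x : SigmaIdx l n m → ℝ) (lam : ℂ) (g : (Fin k ⊕ Fin m) → Fin n ⊕ Fin m),
      chiHom x lam (((PP l n m).submatrix eL g).det) =
        ((pencilC (Emat x) (Amat x) (Bmat x) lam).submatrix eL g).det := by
    intro x lam g
    rw [RingHom.map_det, ← PP_chi x lam]
    rfl
  apply generic_of_poly q
  · -- witness
    set w : SigmaIdx l n m → ℝ := fun idx => match idx with
      | Sum.inl (i, j) => if (i : ℕ) = (j : ℕ) ∧ (j : ℕ) < k then 1 else 0
      | Sum.inr (Sum.inl (i, j)) => if (i : ℕ) + 1 = (j : ℕ) ∧ (j : ℕ) ≤ k then -1 else 0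
      | Sum.inr (Sum.inr (i, j)) => if (i : ℕ) = k + (j : ℕ) then 1 else 0 with hwdef
    refine ⟨w, ?_⟩
    rw [hq, _root_.map_mul]
    apply mul_ne_zero
    · -- the [E B] minor is 1 at the witness
      rw [hevalM w]
      have h1 : (Matrix.fromCols (Emat w) (Bmat w)).submatrix eL g₁ =
          (1 : Matrix (Fin k ⊕ Fin m) (Fin k ⊕ Fin m) ℝ) := by
        refine Matrix.ext fun ρ c => ?_
        rw [Matrix.one_apply]
        cases c with
        | inl a =>
            have he : ((Matrix.fromCols (Emat w) (Bmat w)).submatrix eL g₁) ρ (Sum.inl a) =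
                if ((eL ρ : Fin l) : ℕ) = (a : ℕ) ∧ (a : ℕ) < k then (1 : ℝ) else 0 := rfl
            rw [he]
            cases ρ with
            | inl r =>
                rw [hcoeL r]
                by_cases hra : r = a
                · subst hra; rw [if_pos ⟨rfl, r.isLt⟩, if_pos rfl]
                · rw [if_neg (fun hh => hra (Fin.ext hh.1)),
                    if_neg (fun hh => hra (Sum.inl.inj hh))]
            | inr rb =>
                rw [hcoeR rb]
                rw [if_neg (by omega), if_neg (by simp)]
        | inr b =>
            have he : ((Matrix.fromCols (Emat w) (Bmat w)).submatrix eL g₁) ρ (Sum.inr b) =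
                if ((eL ρ : Fin l) : ℕ) = k + (b : ℕ) then (1 : ℝ) else 0 := rfl
            rw [he]
            cases ρ with
            | inl r =>
                rw [hcoeL r]
                rw [if_neg (by omega), if_neg (by simp)]
            | inr rb =>
                rw [hcoeR rb]
                by_cases hrb : rb = b
                · subst hrb; rw [if_pos rfl, if_pos rfl]
                · rw [if_neg (fun hh => hrb (Fin.ext (by omega))),
                    if_neg (fun hh => hrb (Sum.inr.inj hh))]
      rw [h1, Matrix.det_one]
      exact one_ne_zero
    · -- the Sylvester determinant is 1 at the witness
      have hdetw : MvPolynomial.eval w Syl.det =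
          (sylMatrix k (fun t => (D₁.map (MvPolynomial.eval w)).coeff t)
            (fun t => (D₂.map (MvPolynomial.eval w)).coeff t)).det := by
        rw [RingHom.map_det (MvPolynomial.eval w) Syl, hSyl]
        have hm1 : (sylMatrix k (fun t => D₁.coeff t) (fun t => D₂.coeff t)).map
            (MvPolynomial.eval w) =
            sylMatrix k ((MvPolynomial.eval w) ∘ fun t => D₁.coeff t)
              ((MvPolynomial.eval w) ∘ fun t => D₂.coeff t) :=
          sylMatrix_map (MvPolynomial.eval w) _ _
        congr 1
        rw [show (fun t => (D₁.map (MvPolynomial.eval w)).coeff t) =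
            (MvPolynomial.eval w) ∘ (fun t => D₁.coeff t) from
            funext fun t => Polynomial.coeff_map _ t,
          show (fun t => (D₂.map (MvPolynomial.eval w)).coeff t) =
            (MvPolynomial.eval w) ∘ (fun t => D₂.coeff t) from
            funext fun t => Polynomial.coeff_map _ t]
        exact hm1
      -- compute the two mapped determinants
      set T1 : Matrix (Fin k) (Fin k) (Polynomial ℝ) := Matrix.of fun r a =>
        if (r : ℕ) = (a : ℕ) then Polynomial.X
        else if (r : ℕ) + 1 = (a : ℕ) then 1 else 0 with hT1
      have hblock1 : (pencilPoly (Emat w) (Amat w) (Bmat w)).submatrix eL g₁ =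
          Matrix.fromBlocks T1 0 0 (1 : Matrix (Fin m) (Fin m) (Polynomial ℝ)) := by
        refine Matrix.ext fun ρ c => ?_
        cases c with
        | inl a =>
            have he : ((pencilPoly (Emat w) (Amat w) (Bmat w)).submatrix eL g₁) ρ (Sum.inl a) =
                Polynomial.C (if ((eL ρ : Fin l) : ℕ) = (a : ℕ) ∧ (a : ℕ) < k
                    then (1 : ℝ) else 0) * Polynomial.X -
                  Polynomial.C (if ((eL ρ : Fin l) : ℕ) + 1 = (a : ℕ) ∧ (a : ℕ) ≤ k
                    then (-1 : ℝ) else 0) := rfl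
            rw [he]
            cases ρ with
            | inl r =>
                rw [hcoeL r]
                rw [Matrix.fromBlocks_apply₁₁, hT1]
                by_cases hra : (r : ℕ) = (a : ℕ)
                · rw [if_pos ⟨hra, a.isLt⟩, if_neg (by omega), Matrix.of_apply, if_pos hra]
                  simp
                · rw [if_neg (by omega), Matrix.of_apply, if_neg hra]
                  by_cases hra1 : (r : ℕ) + 1 = (a : ℕ)
                  · rw [if_pos ⟨hra1, by have := a.isLt; omega⟩, if_pos hra1]
                    simp
                  · rw [if_neg (by omega), if_neg hra1]
                    simp
            | inr rb =>
                rw [hcoeR rb]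
                rw [Matrix.fromBlocks_apply₂₁, if_neg (by omega), if_neg (by omega)]
                simp
        | inr b =>
            have he : ((pencilPoly (Emat w) (Amat w) (Bmat w)).submatrix eL g₁) ρ (Sum.inr b) =
                Polynomial.C (if ((eL ρ : Fin l) : ℕ) = k + (b : ℕ) then (1 : ℝ) else 0) := rfl
            rw [he]
            cases ρ with
            | inl r =>
                rw [hcoeL r, Matrix.fromBlocks_apply₁₂, if_neg (by omega)]
                simp
            | inr rb =>
                rw [hcoeR rb, Matrix.fromBlocks_apply₂₂, Matrix.one_apply]
                by_cases hrb : rb = b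
                · subst hrb; rw [if_pos (by omega), if_pos rfl]
                  simp
                · rw [if_neg (fun hh => hrb (Fin.ext (by omega))), if_neg hrb]
                  simp
      have hD1w : D₁.map (MvPolynomial.eval w) = Polynomial.X ^ k := by
        rw [hD₁, hevalD w g₁, hblock1, Matrix.det_fromBlocks_zero₂₁, Matrix.det_one, mul_one]
        have htri : T1.BlockTriangular id := by
          intro i j hij
          have hji : (j : ℕ) < (i : ℕ) := hij
          rw [hT1, Matrix.of_apply, if_neg (by omega), if_neg (by omega)]
        rw [Matrix.det_of_upperTriangular htri]
        have hdiag : ∀ r : Fin k, T1 r r = Polynomial.X := by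
          intro r
          rw [hT1, Matrix.of_apply, if_pos rfl]
        rw [Finset.prod_congr rfl (fun r _ => hdiag r), Finset.prod_const, Finset.card_univ,
          Fintype.card_fin]
      set T2 : Matrix (Fin k) (Fin k) (Polynomial ℝ) := Matrix.of fun r a =>
        if (r : ℕ) = (a : ℕ) then 1
        else if (r : ℕ) = (a : ℕ) + 1 ∧ (a : ℕ) + 1 < k then Polynomial.X else 0 with hT2
      have hblock2 : (pencilPoly (Emat w) (Amat w) (Bmat w)).submatrix eL g₂ =
          Matrix.fromBlocks T2 0 0 (1 : Matrix (Fin m) (Fin m) (Polynomial ℝ)) := by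
        refine Matrix.ext fun ρ c => ?_
        cases c with
        | inl a =>
            have he : ((pencilPoly (Emat w) (Amat w) (Bmat w)).submatrix eL g₂) ρ (Sum.inl a) =
                Polynomial.C (if ((eL ρ : Fin l) : ℕ) = (a : ℕ) + 1 ∧ (a : ℕ) + 1 < k
                    then (1 : ℝ) else 0) * Polynomial.X -
                  Polynomial.C (if ((eL ρ : Fin l) : ℕ) + 1 = (a : ℕ) + 1 ∧ (a : ℕ) + 1 ≤ k
                    then (-1 : ℝ) else 0) := rfl
            rw [he]
            cases ρ with
            | inl r =>
                rw [hcoeL r]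
                rw [Matrix.fromBlocks_apply₁₁, hT2, Matrix.of_apply]
                by_cases hra : (r : ℕ) = (a : ℕ)
                · rw [if_neg (by omega), if_pos ⟨by omega, by have := a.isLt; omega⟩,
                    if_pos hra]
                  simp
                · rw [if_neg hra]
                  by_cases hra1 : (r : ℕ) = (a : ℕ) + 1 ∧ (a : ℕ) + 1 < k
                  · rw [if_pos hra1, if_neg (by omega), if_pos hra1]
                    simp
                  · rw [if_neg hra1, if_neg (by omega), if_neg hra1]
                    simp
            | inr rb =>
                rw [hcoeR rb]
                rw [Matrix.fromBlocks_apply₂₁, if_neg (by omega), if_neg (by omega)]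
                simp
        | inr b =>
            have he : ((pencilPoly (Emat w) (Amat w) (Bmat w)).submatrix eL g₂) ρ (Sum.inr b) =
                Polynomial.C (if ((eL ρ : Fin l) : ℕ) = k + (b : ℕ) then (1 : ℝ) else 0) := rfl
            rw [he]
            cases ρ with
            | inl r =>
                rw [hcoeL r, Matrix.fromBlocks_apply₁₂, if_neg (by omega)]
                simp
            | inr rb =>
                rw [hcoeR rb, Matrix.fromBlocks_apply₂₂, Matrix.one_apply]
                by_cases hrb : rb = b
                · subst hrb; rw [if_pos (by omega), if_pos rfl]
                  simp
                · rw [if_neg (fun hh => hrb (Fin.ext (by omega))), if_neg hrb]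
                  simp
      have hD2w : D₂.map (MvPolynomial.eval w) = 1 := by
        rw [hD₂, hevalD w g₂, hblock2, Matrix.det_fromBlocks_zero₂₁, Matrix.det_one, mul_one]
        have htri : T2.BlockTriangular OrderDual.toDual := by
          intro i j hij
          have hij' : (i : ℕ) < (j : ℕ) := hij
          rw [hT2, Matrix.of_apply, if_neg (by omega), if_neg (by omega)]
        rw [Matrix.det_of_lowerTriangular T2 htri]
        have hdiag : ∀ r : Fin k, T2 r r = 1 := by
          intro r
          rw [hT2, Matrix.of_apply, if_pos rfl]
        rw [Finset.prod_congr rfl (fun r _ => hdiag r), Finset.prod_const, one_pow]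
      rw [hdetw, hD1w, hD2w]
      rw [show (fun t => (Polynomial.X ^ k : Polynomial ℝ).coeff t) =
          (fun t => if t = k then (1 : ℝ) else 0) from
          funext fun t => Polynomial.coeff_X_pow k t,
        show (fun t => (1 : Polynomial ℝ).coeff t) =
          (fun t => if t = 0 then (1 : ℝ) else 0) from
          funext fun t => Polynomial.coeff_one]
      rw [sylMatrix_monomial_one, Matrix.det_one]
      exact one_ne_zero
  · -- implication
    intro x hx0
    rw [hq, _root_.map_mul] at hx0
    obtain ⟨h₁, h₂⟩ := mul_ne_zero_iff.mp hx0
    rw [hevalM x] at h₁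
    have hEB : (Matrix.fromCols (Emat x) (Bmat x)).rank = l :=
      myRank_eq_of_minor _ eL g₁ hcard h₁
    have hEAB : (Matrix.fromCols (Emat x) (Matrix.fromCols (Amat x) (Bmat x))).rank
        = l := by
      refine myRank_eq_of_minor _ eL
        (Sum.elim (fun a : Fin k => Sum.inl (Fin.castLE (by omega) a))
          (fun b : Fin m => Sum.inr (Sum.inr b))) hcard ?_
      have hsame : (Matrix.fromCols (Emat x) (Matrix.fromCols (Amat x) (Bmat x))).submatrix
          eL (Sum.elim (fun a : Fin k => Sum.inl (Fin.castLE (by omega) a))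
            (fun b : Fin m => Sum.inr (Sum.inr b))) =
          (Matrix.fromCols (Emat x) (Bmat x)).submatrix eL g₁ := by
        refine Matrix.ext (fun ρ c => ?_)
        cases c with
        | inl a => rfl
        | inr b => rfl
      rw [hsame]
      exact h₁
    intro lam
    set ψ : SS l n m →+* ℂ := (algebraMap ℝ ℂ).comp (MvPolynomial.eval x) with hψ
    have hdetC : (sylMatrix k (fun t => (D₁.map ψ).coeff t)
        (fun t => (D₂.map ψ).coeff t)).det = ψ Syl.det := by
      rw [RingHom.map_det ψ Syl, hSyl]
      congr 1
      have hm1 : (sylMatrix k (fun t => D₁.coeff t) (fun t => D₂.coeff t)).map ψ =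
          sylMatrix k (ψ ∘ fun t => D₁.coeff t) (ψ ∘ fun t => D₂.coeff t) :=
        sylMatrix_map ψ _ _
      rw [show (fun t => (D₁.map ψ).coeff t) = ψ ∘ (fun t => D₁.coeff t) from
          funext fun t => Polynomial.coeff_map ψ t,
        show (fun t => (D₂.map ψ).coeff t) = ψ ∘ (fun t => D₂.coeff t) from
          funext fun t => Polynomial.coeff_map ψ t]
      exact hm1.symm
    have hdetC_ne : (sylMatrix k (fun t => (D₁.map ψ).coeff t)
        (fun t => (D₂.map ψ).coeff t)).det ≠ 0 := by
      rw [hdetC]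
      have : ψ Syl.det = algebraMap ℝ ℂ (MvPolynomial.eval x Syl.det) := rfl
      rw [this]
      simpa using h₂
    have hnotboth : ¬ ((D₁.map ψ).eval lam = 0 ∧ (D₂.map ψ).eval lam = 0) := by
      rintro ⟨u1, u2⟩
      exact hdetC_ne (sylMatrix_det_eq_zero hk1 _ _
        ((Polynomial.natDegree_map_le).trans hdegD₁)
        ((Polynomial.natDegree_map_le).trans hdegD₂) lam u1 u2)
    have hevalC : ∀ g : (Fin k ⊕ Fin m) → Fin n ⊕ Fin m,
        ((((PP l n m).submatrix eL g).det).map ψ).eval lam =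
          ((pencilC (Emat x) (Amat x) (Bmat x) lam).submatrix eL g).det := by
      intro g
      have h1 : ((((PP l n m).submatrix eL g).det).map ψ).eval lam =
          chiHom x lam (((PP l n m).submatrix eL g).det) := rfl
      rw [h1, hchiD x lam g]
    have hpencil : (pencilC (Emat x) (Amat x) (Bmat x) lam).rank = l := by
      rcases not_and_or.mp hnotboth with h | h
      · refine myRank_eq_of_minor _ eL g₁ hcard ?_
        rw [← hevalC g₁]
        exact h
      · refine myRank_eq_of_minor _ eL g₂ hcard ?_
        rw [← hevalC g₂]
        exact h
    exact ⟨hEAB.trans hEB.symm, hEB.trans hpencil.symm⟩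

/-- The set of completely controllable DAE systems `d/dt(Ex) = Ax + Bu`, i.e. those with
`rk [E, A, B] = rk [E, B] = rk_ℂ [λE − A, B]` for every `λ ∈ ℂ`, is generic in
`Σ_{ℓ,n,m}` if, and only if, `ℓ < n + m`. -/
theorem statement_16 (l n m : ℕ) (hl : 1 ≤ l) (hn : 1 ≤ n) (hm : 1 ≤ m) :
    IsGeneric {x : SigmaIdx l n m → ℝ |
        ∀ lam : ℂ,
          (Matrix.fromCols (Emat x) (Matrix.fromCols (Amat x) (Bmat x))).rank =
            (Matrix.fromCols (Emat x) (Bmat x)).rank ∧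
          (Matrix.fromCols (Emat x) (Bmat x)).rank =
            (pencilC (Emat x) (Amat x) (Bmat x) lam).rank} ↔
      l < n + m := by
  show IsGeneric (ctrlSet l n m) ↔ l < n + m
  constructor
  · intro hgen
    by_contra hge
    push_neg at hge
    rcases eq_or_lt_of_le hge with heq | hlt
    · exact not_generic_eq l n m hn hm heq hgen
    · exact not_generic_big l n m hn hlt hgen
  · intro hlt
    by_cases hml : l ≤ m
    · exact generic_easy l n m hml
    · exact generic_hard l n m (by omega) hlt
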